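/- Let p be a prime, r odd, and T a sequence in Z/p^rZ. If the image of T under the natural map Z/p^rZ → Z/pZ is a U(p)^2-weighted zero-sum sequence, then T is an S(p^r)*-weighted zero-sum sequence. -/

import Mathlib

/-- The set of squares of units of `ZMod n`. -/
def unitSquares (n : ℕ) : Set (ZMod n) :=
  {x | ∃ u : (ZMod n)ˣ, (u : ZMod n) ^ 2 = x}

/-- The set of nonzero squares of `ZMod n`. -/
def nonzeroSquares (n : ℕ) : Set (ZMod n) :=
  {x | x ≠ 0 ∧ ∃ y : ZMod n, y ^ 2 = x}

/-- A (nonempty) sequence is an `A`-weighted zero-sum sequence. -/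
def IsWeightedZeroSum {n k : ℕ} (A : Set (ZMod n)) (x : Fin k → ZMod n) : Prop :=
  0 < k ∧ ∃ w : Fin k → ZMod n, (∀ i, w i ∈ A) ∧ ∑ i, w i * x i = 0

/-- The sequence `x` has an `A`-weighted zero-sum subsequence. -/
def HasWZSSubseq {n k : ℕ} (A : Set (ZMod n)) (x : Fin k → ZMod n) : Prop :=
  ∃ I : Finset (Fin k), I.Nonempty ∧ ∃ w : Fin k → ZMod n,
    (∀ i ∈ I, w i ∈ A) ∧ ∑ i ∈ I, w i * x i = 0

/-- The sequence `x` has an `A`-weighted zero-sum subsequence of consecutive terms. -/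
def HasConsecWZS {n k : ℕ} (A : Set (ZMod n)) (x : Fin k → ZMod n) : Prop :=
  ∃ i j : Fin k, i ≤ j ∧ ∃ w : Fin k → ZMod n,
    (∀ t ∈ Finset.Icc i j, w t ∈ A) ∧ ∑ t ∈ Finset.Icc i j, w t * x t = 0

/-- `k` is admissible for the `A`-weighted Davenport constant of `ZMod n`. -/
def DConst (n : ℕ) (A : Set (ZMod n)) (k : ℕ) : Prop :=
  0 < k ∧ ∀ x : Fin k → ZMod n, HasWZSSubseq A x

/-- `k` is admissible for the constant `C_A` of `ZMod n`. -/
def CConst (n : ℕ) (A : Set (ZMod n)) (k : ℕ) : Prop :=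
  0 < k ∧ ∀ x : Fin k → ZMod n, HasConsecWZS A x

theorem stmt8 (p : ℕ) (hp : p.Prime) (r : ℕ) (hr : Odd r)
    (hdp : p ∣ p ^ r) (k : ℕ) (x : Fin k → ZMod (p ^ r))
    (h : IsWeightedZeroSum (unitSquares p)
      (fun i => ZMod.castHom hdp (ZMod p) (x i))) :
    IsWeightedZeroSum (nonzeroSquares (p ^ r)) x := by
  obtain ⟨hk, w, hw, hsum⟩ := h
  obtain ⟨s, hs⟩ := hr
  haveI : NeZero (p ^ r) := ⟨pow_ne_zero r hp.pos.ne'⟩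
  haveI : NeZero p := ⟨hp.pos.ne'⟩
  choose u hu using hw
  choose v hv using fun i => ZMod.unitsMap_surjective hdp (u i)
  have hcastv : ∀ i, ZMod.castHom hdp (ZMod p) ((v i : ZMod (p ^ r)) ^ 2) = w i := by
    intro i
    rw [map_pow]
    have := congrArg (Units.val) (hv i)
    rw [ZMod.unitsMap] at this
    simp only [Units.coe_map, MonoidHom.coe_coe] at this
    rw [this, hu]
  -- the inner sum S is divisible by p
  set S : ZMod (p ^ r) := ∑ i, (v i : ZMod (p ^ r)) ^ 2 * x i with hS
  have hSc : ZMod.castHom hdp (ZMod p) S = 0 := by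
    rw [hS, map_sum]
    simp only [map_mul, hcastv]
    exact hsum
  have hpS : ∃ y : ZMod (p ^ r), S = p * y := by
    have h1 : ((S.val : ℕ) : ZMod p) = 0 := by
      rw [ZMod.natCast_val]
      rw [ZMod.castHom_apply] at hSc
      exact hSc
    obtain ⟨m, hm⟩ := (ZMod.natCast_eq_zero_iff _ _).mp h1
    refine ⟨(m : ZMod (p ^ r)), ?_⟩
    have h2 : ((S.val : ℕ) : ZMod (p ^ r)) = S := by
      rw [ZMod.natCast_val, ZMod.cast_id]
    rw [← h2, hm]
    push_cast
    ring
  refine ⟨hk, fun i => (p : ZMod (p ^ r)) ^ (r - 1) * (v i : ZMod (p ^ r)) ^ 2, ?_, ?_⟩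
  · intro i
    constructor
    · intro h0
      replace h0 : (p : ZMod (p ^ r)) ^ (r - 1) * ((v i : ZMod (p ^ r))) ^ 2 = 0 := h0
      have hu2 : IsUnit ((v i : ZMod (p ^ r)) ^ 2) := (v i).isUnit.pow 2
      rw [mul_comm] at h0
      have h3 : ((p : ZMod (p ^ r))) ^ (r - 1) = 0 := (hu2.mul_right_eq_zero).mp h0
      have h4 : ((p ^ (r - 1) : ℕ) : ZMod (p ^ r)) = 0 := by push_cast; exact h3
      have h5 : p ^ r ∣ p ^ (r - 1) := (ZMod.natCast_eq_zero_iff _ _).mp h4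
      have h6 := Nat.le_of_dvd (Nat.pow_pos hp.pos) h5
      have h7 : p ^ (r - 1) < p ^ r := Nat.pow_lt_pow_right hp.one_lt (by omega)
      omega
    · exact ⟨(p : ZMod (p ^ r)) ^ s * (v i : ZMod (p ^ r)), by
        rw [mul_pow, ← pow_mul]
        congr 2
        omega⟩
  · obtain ⟨y, hy⟩ := hpS
    have : ∑ i, (p : ZMod (p ^ r)) ^ (r - 1) * (v i : ZMod (p ^ r)) ^ 2 * x i
        = (p : ZMod (p ^ r)) ^ (r - 1) * S := by
      rw [hS, Finset.mul_sum]
      exact Finset.sum_congr rfl fun i _ => by ring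
    rw [this, hy, ← mul_assoc, ← pow_succ]
    have hr1 : r - 1 + 1 = r := by omega
    rw [hr1]
    have : ((p : ZMod (p ^ r))) ^ r = 0 := by
      have : ((p ^ r : ℕ) : ZMod (p ^ r)) = 0 := ZMod.natCast_self _
      push_cast at this
      exact this
    rw [this, zero_mul]
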